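/- In the corrector setting, suppose x₊, s₊, s̃₊ ∈ ℝⁿ with ⟨x₊, s̃₊⟩ = ν where ν ≥ 1, τ₊, κ₊ > 0, W₊ is a symmetric n×n matrix with W₊·x₊ = s₊, μ₊ := ⟨x₊, s₊⟩/ν, and Δz = (Δy, Δx, Δτ, Δs, Δκ) satisfies G(Δz) = 0, τ₊·Δκ + κ₊·Δτ = 0, and W₊·Δx + Δs = μ₊·s̃₊ − s₊. Then: (i) ⟨x₊, Δs⟩ + ⟨Δx, s₊⟩ = 0; (ii) ⟨Δx, Δs⟩ + Δτ·Δκ = 0; and (iii) ⟨x₊ + Δx, s₊ + Δs⟩ + (τ₊ + Δτ)·(κ₊ + Δκ) = ⟨x₊, s₊⟩ + τ₊·κ₊. -/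

import Mathlib

open Matrix

/-- The residual map of the homogeneous self-dual model:
`G(y, x, τ, s, κ) = (A x − τ b, −Aᵀ y + τ c − s, ⟨b,y⟩ − ⟨c,x⟩ − κ)`. -/
def Gres {m n : ℕ} (A : Matrix (Fin m) (Fin n) ℝ) (b : Fin m → ℝ) (c : Fin n → ℝ)
    (y : Fin m → ℝ) (x : Fin n → ℝ) (τ : ℝ) (s : Fin n → ℝ) (κ : ℝ) :
    (Fin m → ℝ) × (Fin n → ℝ) × ℝ :=
  (A *ᵥ x - τ • b, -(Aᵀ *ᵥ y) + τ • c - s, b ⬝ᵥ y - c ⬝ᵥ x - κ)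

/-- Basic identities for the corrector direction. -/
theorem stmt14 {m n : ℕ} (A : Matrix (Fin m) (Fin n) ℝ) (b : Fin m → ℝ) (c : Fin n → ℝ)
    (ν : ℝ) (hν : 1 ≤ ν)
    (xp sp stp : Fin n → ℝ) (hxst : xp ⬝ᵥ stp = ν)
    (τp κp : ℝ) (hτ : 0 < τp) (hκ : 0 < κp)
    (Wp : Matrix (Fin n) (Fin n) ℝ) (hWsymm : Wp.IsSymm) (hWx : Wp *ᵥ xp = sp)
    (μp : ℝ) (hμp : μp = xp ⬝ᵥ sp / ν)
    (Δy : Fin m → ℝ) (Δx : Fin n → ℝ) (Δτ : ℝ) (Δs : Fin n → ℝ) (Δκ : ℝ)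
    (hG : Gres A b c Δy Δx Δτ Δs Δκ = 0)
    (hτκ : τp * Δκ + κp * Δτ = 0)
    (hxs : Wp *ᵥ Δx + Δs = μp • stp - sp) :
    xp ⬝ᵥ Δs + Δx ⬝ᵥ sp = 0 ∧
    Δx ⬝ᵥ Δs + Δτ * Δκ = 0 ∧
    (xp + Δx) ⬝ᵥ (sp + Δs) + (τp + Δτ) * (κp + Δκ) = xp ⬝ᵥ sp + τp * κp := by
  have hν0 : ν ≠ 0 := by linarith
  simp only [Gres, Prod.mk_eq_zero] at hG
  obtain ⟨h1, h2, h3⟩ := hG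
  have h1' : A *ᵥ Δx = Δτ • b := by
    have := sub_eq_zero.mp h1; exact this
  have h2' : Δs = -(Aᵀ *ᵥ Δy) + Δτ • c := by
    have := sub_eq_zero.mp h2; exact this.symm
  have h3' : Δκ = b ⬝ᵥ Δy - c ⬝ᵥ Δx := by
    have := sub_eq_zero.mp h3; exact this.symm
  -- part (i)
  have hsymm : xp ⬝ᵥ (Wp *ᵥ Δx) = sp ⬝ᵥ Δx := by
    rw [Matrix.dotProduct_mulVec, ← Matrix.mulVec_transpose, hWsymm.eq, hWx]
  have hΔs : Δs = μp • stp - sp - Wp *ᵥ Δx := by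
    rw [← hxs]; abel
  have hi : xp ⬝ᵥ Δs + Δx ⬝ᵥ sp = 0 := by
    rw [hΔs]
    simp only [dotProduct_sub, dotProduct_smul, hsymm, hxst, smul_eq_mul]
    rw [hμp, dotProduct_comm sp Δx] at *
    field_simp
    ring
  -- part (ii)
  have hii : Δx ⬝ᵥ Δs + Δτ * Δκ = 0 := by
    rw [h2', h3']
    have e1 : Δx ⬝ᵥ (Aᵀ *ᵥ Δy) = (A *ᵥ Δx) ⬝ᵥ Δy := by
      rw [Matrix.dotProduct_mulVec, ← Matrix.mulVec_transpose, Matrix.transpose_transpose,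
        dotProduct_comm]
    simp only [dotProduct_add, dotProduct_neg, dotProduct_smul, e1, h1',
      smul_eq_mul, smul_dotProduct, dotProduct_comm c Δx]
    ring
  refine ⟨hi, hii, ?_⟩
  simp only [add_dotProduct, dotProduct_add]
  have : Δx ⬝ᵥ sp = sp ⬝ᵥ Δx := dotProduct_comm _ _
  nlinarith [hi, hii, hτκ]
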